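/- Correctness of the HORNET data transmission phase on the forward path (the 'correctness' property of Camenisch–Lysyanskaya, forward direction): let SV_0, …, SV_{l−1} ∈ {0,1}^k be node-local secrets, s_0, …, s_{l−1} ∈ {0,1}^k keys shared with the source, R_0, …, R_{l−1} routing strings and exp an expiration string with |s_i ‖ R_i ‖ exp| = |FS| for each i, and set FS_i = fs_create(SV_i, s_i, R_i, exp). Let (FS_i, γ_i, β_i), 0 ≤ i ≤ l−1, be the headers produced by the create_ahdr construction from (s_0, …, s_{l−1}) and (FS_0, …, FS_{l−1}). Let M be any bit string and IV ∈ {0,1}^k; set O_l = M, IV_l = IV, and (O_i, IV_i) = add_layer(s_i, IV_{i+1}, O_{i+1}) for i = l−1 down to 0. Then for every 0 ≤ i ≤ l−1: (i) fs_open(SV_i, FS_i) = s_i ‖ R_i ‖ exp, so node i recovers its shared key and routing information; (ii) the MAC verification succeeds: γ_i = MAC(h_MAC(s_i); FS_i ‖ β_i); (iii) if i ≤ l−2, the per-hop header processing yields the next header: (β_i ‖ 0^c) ⊕ PRG2(h_PRG2(s_i)) = FS_{i+1} ‖ γ_{i+1} ‖ β_{i+1}; and (iv) remove_layer(s_i,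 IV_i, O_i) = (O_{i+1}, IV_{i+1}); in particular the destination (node l−1) obtains the original data payload M. -/

import Mathlib

/-- Bit strings: finite sequences of bits. -/
abbrev BS : Type := List Bool

/-- Bitwise XOR of (equal-length) bit strings. -/
def bxor (σ τ : BS) : BS := List.zipWith xor σ τ

/-- Substring from bit position `a` through `b` inclusive (0-indexed). -/
def substr (σ : BS) (a b : ℕ) : BS := (σ.drop a).take (b + 1 - a)

/-- All-zero string of length `a`. -/
def zeros (a : ℕ) : BS := List.replicate a false

lemma bxor_length (a b : BS) : (bxor a b).length = min a.length b.length :=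
  List.length_zipWith

lemma bxor_take (n : ℕ) (a b : BS) : (bxor a b).take n = bxor (a.take n) (b.take n) :=
  List.take_zipWith

lemma bxor_drop (n : ℕ) (a b : BS) : (bxor a b).drop n = bxor (a.drop n) (b.drop n) :=
  List.drop_zipWith

lemma bxor_append {a b : BS} (x y : BS) (h : a.length = b.length) :
    bxor (a ++ x) (b ++ y) = bxor a b ++ bxor x y :=
  List.zipWith_append h

lemma bxor_cancel : ∀ (a b : BS), a.length ≤ b.length → bxor (bxor a b) b = a := by
  intro a
  induction a with
  | nil => intro b _; rfl
  | cons x xs ih =>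
    intro b h
    cases b with
    | nil => simp at h
    | cons y ys =>
      simp only [bxor, List.zipWith_cons_cons] at *
      rw [ih ys (by simpa using h)]
      congr 1
      cases x <;> cases y <;> rfl

lemma bxor_zeros : ∀ (n : ℕ) (x : BS), bxor (zeros n) x = x.take n := by
  intro n
  induction n with
  | zero => intro x; rfl
  | succ n ih =>
    intro x
    cases x with
    | nil => simp [bxor, zeros]
    | cons y ys =>
      simp only [zeros, List.replicate_succ, bxor, List.zipWith_cons_cons, List.take_succ_cons]
      rw [show xor false y = y from by cases y <;> rfl]
      exact congrArg _ (ih ys)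

lemma bxor_trunc : ∀ (X Y : BS), bxor X Y = bxor (X.take Y.length) Y := by
  intro X
  induction X with
  | nil => intro Y; simp
  | cons x xs ih =>
    intro Y
    cases Y with
    | nil => rfl
    | cons y ys =>
      simp only [bxor, List.length_cons, List.take_succ_cons, List.zipWith_cons_cons]
      exact congrArg _ (ih ys)

lemma take_append_long (A Z : BS) (n : ℕ) (h : A.length ≤ n) :
    (A ++ Z).take n = A ++ Z.take (n - A.length) := by
  rw [List.take_append, List.take_of_length_le h]

/-- Correctness of the HORNET data transmission phase on the
forward path: for every node `i`, (i) `fs_open` recovers `s i ‖ R i ‖ exp`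
from the forwarding segment, (ii) the per-hop MAC verification succeeds,
(iii) per-hop header processing yields the header constructed for node `i+1`,
and (iv) `remove_layer` inverts the source's onion encryption, so the
destination obtains the original payload `M`. -/
theorem hornet_data_transmission_forward_correctness
    (k fsl r l : ℕ) (hk : 1 ≤ k) (hfsl : k ≤ fsl) (hr : 1 ≤ r)
    (hl1 : 1 ≤ l) (hlr : l ≤ r)
    (c : ℕ) (hc : c = fsl + k)
    -- header primitives
    (PRG2 : BS → BS) (hPRG2len : ∀ x, (PRG2 x).length = r * c)
    (MAC : BS → BS → BS) (hMAClen : ∀ key msg, (MAC key msg).length = k)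
    (hPRG2 hMAC : BS → BS)
    (hhPRG2len : ∀ x, (hPRG2 x).length = k) (hhMAClen : ∀ x, (hMAC x).length = k)
    -- forwarding-segment primitives
    (PRPFS PRPFSinv : BS → BS → BS)
    (hPRPFSlen : ∀ key x, (PRPFS key x).length = x.length)
    (hPRPFSinv : ∀ key x, PRPFSinv key (PRPFS key x) = x)
    (hPRP : BS → BS) (hhPRPlen : ∀ x, (hPRP x).length = k)
    (fsCreate : BS → BS → BS → BS → BS) (fsOpen : BS → BS → BS)
    (hfsCreate : ∀ SV s R e, fsCreate SV s R e = PRPFS (hPRP SV) (s ++ R ++ e))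
    (hfsOpen : ∀ SV F, fsOpen SV F = PRPFSinv (hPRP SV) F)
    -- payload primitives
    (ENC DEC : BS → BS → BS → BS)
    (hENClen : ∀ key iv O, (ENC key iv O).length = O.length)
    (hDEClen : ∀ key iv O, (DEC key iv O).length = O.length)
    (hDECENC : ∀ key iv O, DEC key iv (ENC key iv O) = O)
    (PRP PRPinv : BS → BS → BS)
    (hPRPlen : ∀ key iv, (PRP key iv).length = iv.length)
    (hPRPinv : ∀ key iv, PRPinv key (PRP key iv) = iv)
    (hENC : BS → BS) (hhENClen : ∀ x, (hENC x).length = k)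
    (addLayer removeLayer : BS → BS → BS → BS × BS)
    (haddLayer : ∀ s iv O, addLayer s iv O = (ENC (hENC s) iv O, PRP (hPRP s) iv))
    (hremoveLayer : ∀ s iv O, removeLayer s iv O =
      (DEC (hENC s) (PRPinv (hPRP s) iv) O, PRPinv (hPRP s) iv))
    -- node-local secrets, shared keys, routing strings, expiration
    (SV s R : ℕ → BS) (expt : BS)
    (hSV : ∀ i, i < l → (SV i).length = k)
    (hs : ∀ i, i < l → (s i).length = k)
    (hlen : ∀ i, i < l → (s i ++ R i ++ expt).length = fsl)
    (FS : ℕ → BS)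
    (hFSdef : ∀ i, i < l → FS i = fsCreate (SV i) (s i) (R i) expt)
    -- the create_ahdr construction
    (φ β γ : ℕ → BS)
    (hφ0 : φ 0 = [])
    (hφ : ∀ i, i + 1 < l → φ (i + 1) =
      bxor (φ i ++ zeros c) (substr (PRG2 (hPRG2 (s i))) ((r - 1 - i) * c) (r * c - 1)))
    (ρ : BS) (hρ : ρ.length = (r - l) * c)
    (hβlast : β (l - 1) = ρ ++ φ (l - 1))
    (hγlast : γ (l - 1) = MAC (hMAC (s (l - 1))) (FS (l - 1) ++ β (l - 1)))
    (hβ : ∀ i, i + 1 < l → β i =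
      bxor (FS (i + 1) ++ γ (i + 1) ++ substr (β (i + 1)) 0 ((r - 2) * c - 1))
           (substr (PRG2 (hPRG2 (s i))) 0 ((r - 1) * c - 1)))
    (hγ : ∀ i, i + 1 < l → γ i = MAC (hMAC (s i)) (FS i ++ β i))
    -- the source's onion encryption of the payload
    (M IV₀ : BS) (hIV₀ : IV₀.length = k)
    (O IV : ℕ → BS)
    (hOl : O l = M) (hIVl : IV l = IV₀)
    (hstep : ∀ i, i < l → (O i, IV i) = addLayer (s i) (IV (i + 1)) (O (i + 1))) :
    ∀ i, i < l →
      (fsOpen (SV i) (FS i) = s i ++ R i ++ expt) ∧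
      (γ i = MAC (hMAC (s i)) (FS i ++ β i)) ∧
      (i + 1 < l →
        bxor (β i ++ zeros c) (PRG2 (hPRG2 (s i)))
          = FS (i + 1) ++ γ (i + 1) ++ β (i + 1)) ∧
      (removeLayer (s i) (IV i) (O i) = (O (i + 1), IV (i + 1))) := by
  have hc1 : 1 ≤ c := by omega
  have mulc_le : ∀ {a b : ℕ}, a ≤ b → a * c ≤ b * c := fun h => Nat.mul_le_mul_right c h
  have hFSlen : ∀ j, j < l → (FS j).length = fsl := by
    intro j hj; rw [hFSdef j hj, hfsCreate, hPRPFSlen]; exact hlen j hj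
  have hγlen : ∀ j, j < l → (γ j).length = k := by
    intro j hj
    rcases Nat.lt_or_ge (j + 1) l with h | h
    · rw [hγ j h]; exact hMAClen _ _
    · have hj' : j = l - 1 := by omega
      rw [hj', hγlast]; exact hMAClen _ _
  have hcFSγ : ∀ j, j < l → (FS j ++ γ j).length = c := by
    intro j hj; rw [List.length_append, hFSlen j hj, hγlen j hj, hc]
  -- normalized φ recursion
  have hφ' : ∀ j, j + 1 < l → φ (j + 1) =
      bxor (φ j ++ zeros c) ((PRG2 (hPRG2 (s j))).drop ((r - 1 - j) * c)) := by
    intro j hj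
    rw [hφ j hj]
    congr 1
    simp only [substr]
    apply List.take_of_length_le
    rw [List.length_drop, hPRG2len]
    have h1 : 1 ≤ r * c := Nat.mul_le_mul hr hc1
    have h2 : (r - 1 - j) * c ≤ r * c := mulc_le (by omega)
    omega
  have hφlen : ∀ j, j < l → (φ j).length = j * c := by
    intro j
    induction j with
    | zero => intro _; rw [hφ0]; simp
    | succ n ih =>
      intro h
      rw [hφ' n h, bxor_length, List.length_append, ih (by omega), List.length_drop, hPRG2len]
      have hz : (zeros c).length = c := List.length_replicate
      rw [hz]
      have h2 : (r - 1 - n) * c ≤ r * c := mulc_le (by omega)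
      have h3 : r * c - (r - 1 - n) * c = (n + 1) * c := by
        rw [← Nat.sub_mul]; congr 1; omega
      have h4 : (n + 1) * c = n * c + c := by rw [Nat.add_mul, one_mul]
      omega
  -- Claim A: last block of φ (j+1) is the last block of PRG2 for key j
  have hA : ∀ j, j + 1 < l →
      (φ (j + 1)).drop (j * c) = (PRG2 (hPRG2 (s j))).drop ((r - 1) * c) := by
    intro j hj
    rw [hφ' j hj, bxor_drop, List.drop_left' (hφlen j (by omega)), List.drop_drop]
    have e : (r - 1 - j) * c + j * c = (r - 1) * c := by
      rw [← Nat.add_mul]; congr 1; omega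
    rw [e, bxor_zeros]
    apply List.take_of_length_le
    rw [List.length_drop, hPRG2len]
    have h2 : r * c - (r - 1) * c = 1 * c := by rw [← Nat.sub_mul]; congr 1; omega
    omega
  -- normalized β recursion
  have hβ' : ∀ j, j + 1 < l → β j =
      bxor (FS (j + 1) ++ γ (j + 1) ++ (β (j + 1)).take ((r - 2) * c))
        ((PRG2 (hPRG2 (s j))).take ((r - 1) * c)) := by
    intro j hj
    have hr2 : 2 ≤ r := by omega
    have hrc1 : 1 ≤ (r - 1) * c := Nat.mul_le_mul (show (1:ℕ) ≤ r - 1 by omega) hc1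
    have e1 : substr (PRG2 (hPRG2 (s j))) 0 ((r - 1) * c - 1)
        = (PRG2 (hPRG2 (s j))).take ((r - 1) * c) := by
      unfold substr; rw [List.drop_zero]; congr 1; omega
    rw [hβ j hj, e1]
    have hQlen : ((PRG2 (hPRG2 (s j))).take ((r - 1) * c)).length = (r - 1) * c := by
      rw [List.length_take, hPRG2len]
      exact Nat.min_eq_left (mulc_le (by omega))
    have htakes : (FS (j + 1) ++ γ (j + 1) ++ substr (β (j + 1)) 0 ((r - 2) * c - 1)).take
          ((r - 1) * c)
        = (FS (j + 1) ++ γ (j + 1) ++ (β (j + 1)).take ((r - 2) * c)).take ((r - 1) * c) := by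
      have hle : (FS (j + 1) ++ γ (j + 1)).length ≤ (r - 1) * c := by
        rw [hcFSγ (j + 1) hj]
        exact Nat.le_mul_of_pos_left c (by omega)
      rw [take_append_long _ _ _ hle, take_append_long _ _ _ hle, hcFSγ (j + 1) hj]
      congr 1
      have e2 : (r - 1) * c - c = (r - 2) * c := by
        rw [show (r:ℕ) - 1 = (r - 2) + 1 from by omega, Nat.add_mul, one_mul]; omega
      simp only [substr, List.drop_zero, List.take_take, e2]
      congr 1
      omega
    calc bxor (FS (j + 1) ++ γ (j + 1) ++ substr (β (j + 1)) 0 ((r - 2) * c - 1))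
            ((PRG2 (hPRG2 (s j))).take ((r - 1) * c))
        = bxor ((FS (j + 1) ++ γ (j + 1) ++ substr (β (j + 1)) 0 ((r - 2) * c - 1)).take
            (((PRG2 (hPRG2 (s j))).take ((r - 1) * c)).length))
            ((PRG2 (hPRG2 (s j))).take ((r - 1) * c)) := bxor_trunc _ _
      _ = bxor ((FS (j + 1) ++ γ (j + 1) ++ (β (j + 1)).take ((r - 2) * c)).take
            (((PRG2 (hPRG2 (s j))).take ((r - 1) * c)).length))
            ((PRG2 (hPRG2 (s j))).take ((r - 1) * c)) := by rw [hQlen, htakes]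
      _ = bxor (FS (j + 1) ++ γ (j + 1) ++ (β (j + 1)).take ((r - 2) * c))
            ((PRG2 (hPRG2 (s j))).take ((r - 1) * c)) := (bxor_trunc _ _).symm
  -- main downward induction: length of β and tail invariant
  have main : ∀ d, d < l → (β (l - 1 - d)).length = (r - 1) * c ∧
      (β (l - 1 - d)).drop ((r - 1 - (l - 1 - d)) * c) = φ (l - 1 - d) := by
    intro d
    induction d with
    | zero =>
      intro _
      simp only [Nat.sub_zero]
      constructor
      · rw [hβlast, List.length_append, hρ, hφlen (l - 1) (by omega), ← Nat.add_mul]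
        congr 1; omega
      · rw [hβlast,
          show (r - 1 - (l - 1)) * c = ρ.length from by rw [hρ]; congr 1; omega,
          List.drop_left]
    | succ d ih =>
      intro hd
      obtain ⟨ihlen, ihT⟩ := ih (by omega)
      set j := l - 1 - (d + 1) with hjdef
      have hj1 : l - 1 - d = j + 1 := by omega
      rw [hj1] at ihlen ihT
      have hjl : j + 1 < l := by omega
      have hr2 : 2 ≤ r := by omega
      have e2 : (r - 1) * c = (r - 2) * c + c := by
        rw [show (r:ℕ) - 1 = (r - 2) + 1 from by omega, Nat.add_mul, one_mul]
      constructor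
      · rw [hβ' j hjl, bxor_length, List.length_append, List.length_append,
          hFSlen (j + 1) hjl, hγlen (j + 1) hjl, List.length_take, List.length_take,
          ihlen, hPRG2len]
        have h2 : (r - 2) * c ≤ (r - 1) * c := mulc_le (by omega)
        have h3 : (r - 1) * c ≤ r * c := mulc_le (by omega)
        omega
      · rw [hβ' j hjl, bxor_drop]
        have hlhs : ((FS (j + 1) ++ γ (j + 1) ++ (β (j + 1)).take ((r - 2) * c))).drop
            ((r - 1 - j) * c) = (φ (j + 1)).take (j * c) := by
          rw [List.drop_append,
            List.drop_eq_nil_of_le (by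
              rw [hcFSγ (j + 1) hjl]
              exact Nat.le_mul_of_pos_left c (by omega)),
            hcFSγ (j + 1) hjl, List.nil_append, List.drop_take]
          have em : (r - 1 - j) * c - c = (r - 1 - (j + 1)) * c := by
            rw [show (r:ℕ) - 1 - j = (r - 1 - (j + 1)) + 1 from by omega, Nat.add_mul,
              one_mul]; omega
          rw [em, ihT]
          congr 1
          rw [← Nat.sub_mul]; congr 1; omega
        have hrhs : ((PRG2 (hPRG2 (s j))).take ((r - 1) * c)).drop ((r - 1 - j) * c)
            = ((PRG2 (hPRG2 (s j))).drop ((r - 1 - j) * c)).take (j * c) := by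
          rw [List.drop_take]
          congr 1
          rw [← Nat.sub_mul]; congr 1; omega
        rw [hlhs, hrhs, hφ' j hjl, bxor_take, List.take_left' (hφlen j (by omega))]
        apply bxor_cancel
        rw [hφlen j (by omega), List.length_take, List.length_drop, hPRG2len]
        have e3 : (r - 1 - j) * c + (j + 1) * c = r * c := by
          rw [← Nat.add_mul]; congr 1; omega
        have e4 : (j + 1) * c = j * c + c := by rw [Nat.add_mul, one_mul]
        omega
  have hβlen : ∀ j, j < l → (β j).length = (r - 1) * c := by
    intro j hj
    have h := (main (l - 1 - j) (by omega)).1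
    rwa [show l - 1 - (l - 1 - j) = j from by omega] at h
  have hT : ∀ j, j < l → (β j).drop ((r - 1 - j) * c) = φ j := by
    intro j hj
    have h := (main (l - 1 - j) (by omega)).2
    rwa [show l - 1 - (l - 1 - j) = j from by omega] at h
  intro i hi
  refine ⟨?_, ?_, ?_, ?_⟩
  · rw [hfsOpen, hFSdef i hi, hfsCreate, hPRPFSinv]
  · rcases Nat.lt_or_ge (i + 1) l with h | h
    · exact hγ i h
    · have hi' : i = l - 1 := by omega
      rw [hi']; exact hγlast
  · intro h1
    have hr2 : 2 ≤ r := by omega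
    have e2 : (r - 1) * c = (r - 2) * c + c := by
      rw [show (r:ℕ) - 1 = (r - 2) + 1 from by omega, Nat.add_mul, one_mul]
    have key : (PRG2 (hPRG2 (s i))).drop ((r - 1) * c) = (β (i + 1)).drop ((r - 2) * c) := by
      rw [← hA i h1, ← hT (i + 1) h1, List.drop_drop]
      congr 1
      rw [← Nat.add_mul]; congr 1; omega
    have hβ1len : (β (i + 1)).length = (r - 1) * c := hβlen (i + 1) h1
    have hAlen : (FS (i + 1) ++ γ (i + 1) ++ (β (i + 1)).take ((r - 2) * c)).length
        = (r - 1) * c := by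
      rw [List.length_append, hcFSγ (i + 1) h1, List.length_take, hβ1len]
      have h2 : (r - 2) * c ≤ (r - 1) * c := mulc_le (by omega)
      omega
    have hQlen : ((PRG2 (hPRG2 (s i))).take ((r - 1) * c)).length = (r - 1) * c := by
      rw [List.length_take, hPRG2len]
      exact Nat.min_eq_left (mulc_le (by omega))
    have hP2len : ((PRG2 (hPRG2 (s i))).drop ((r - 1) * c)).length ≤ c := by
      rw [List.length_drop, hPRG2len]
      have h2 : r * c - (r - 1) * c = 1 * c := by rw [← Nat.sub_mul]; congr 1; omega
      omega
    rw [hβ' i h1]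
    calc bxor (bxor (FS (i + 1) ++ γ (i + 1) ++ (β (i + 1)).take ((r - 2) * c))
            ((PRG2 (hPRG2 (s i))).take ((r - 1) * c)) ++ zeros c) (PRG2 (hPRG2 (s i)))
        = bxor (bxor (FS (i + 1) ++ γ (i + 1) ++ (β (i + 1)).take ((r - 2) * c))
            ((PRG2 (hPRG2 (s i))).take ((r - 1) * c)) ++ zeros c)
            ((PRG2 (hPRG2 (s i))).take ((r - 1) * c) ++
              (PRG2 (hPRG2 (s i))).drop ((r - 1) * c)) := by
          rw [List.take_append_drop]
      _ = bxor (bxor (FS (i + 1) ++ γ (i + 1) ++ (β (i + 1)).take ((r - 2) * c))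
            ((PRG2 (hPRG2 (s i))).take ((r - 1) * c)))
            ((PRG2 (hPRG2 (s i))).take ((r - 1) * c)) ++
          bxor (zeros c) ((PRG2 (hPRG2 (s i))).drop ((r - 1) * c)) := by
          apply bxor_append
          rw [bxor_length, hAlen, hQlen]; exact Nat.min_self _
      _ = (FS (i + 1) ++ γ (i + 1) ++ (β (i + 1)).take ((r - 2) * c)) ++
            (PRG2 (hPRG2 (s i))).drop ((r - 1) * c) := by
          rw [bxor_cancel (FS (i + 1) ++ γ (i + 1) ++ (β (i + 1)).take ((r - 2) * c))
            ((PRG2 (hPRG2 (s i))).take ((r - 1) * c)) (by rw [hAlen, hQlen]), bxor_zeros,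
            List.take_of_length_le hP2len]
      _ = FS (i + 1) ++ γ (i + 1) ++ β (i + 1) := by
          rw [key, List.append_assoc (FS (i + 1) ++ γ (i + 1)), List.take_append_drop]
  · have h2 := hstep i hi
    rw [haddLayer] at h2
    have hO : O i = ENC (hENC (s i)) (IV (i + 1)) (O (i + 1)) := congrArg Prod.fst h2
    have hIV : IV i = PRP (hPRP (s i)) (IV (i + 1)) := congrArg Prod.snd h2
    rw [hremoveLayer, hO, hIV, hPRPinv, hDECENC]
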